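/- Let n ∈ ℕ and f : ℝ → ℝ be additive. If the map α ↦ δ_α^{n+1} f(1) is continuous at some point (or bounded on a set of positive measure), then there exists an n-th order derivation d : ℝ → ℝ such that f(x) = d(x) + f(1)·x for all x ∈ ℝ; and conversely. -/

import Mathlib

open MeasureTheory
open scoped ENNReal NNReal

noncomputable def δ (α : ℝ) (f : ℝ → ℝ) : ℝ → ℝ := fun x => f (α * x) - α * f x

def IsDerivOfOrder (n : ℕ) (d : ℝ → ℝ) : Prop :=
  (∀ x y : ℝ, d (x + y) = d x + d y) ∧ d 1 = 0 ∧
    ∀ l : List ℝ, l.length = n + 1 → ∀ x : ℝ, (l.foldr δ d) x = 0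

namespace Stmt11Aux

/-- forward difference operator -/
noncomputable def Δ (h : ℝ) (G : ℝ → ℝ) : ℝ → ℝ := fun x => G (x + h) - G x

lemma delta_comm (a b : ℝ) (h : ℝ → ℝ) : δ a (δ b h) = δ b (δ a h) := by
  funext x
  simp only [δ]
  rw [show b * (a * x) = a * (b * x) by ring]
  ring

lemma foldr_perm {l₁ l₂ : List ℝ} (p : l₁.Perm l₂) (f0 : ℝ → ℝ) :
    l₁.foldr δ f0 = l₂.foldr δ f0 := by
  induction p with
  | nil => rfl
  | cons x _ ih => simp only [List.foldr_cons, ih]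
  | swap x y l => simp only [List.foldr_cons]; exact (delta_comm x y _).symm
  | trans _ _ ih1 ih2 => exact ih1.trans ih2

variable {f : ℝ → ℝ}

-- iterated delta machinery

/-- additivity of iterated δ's -/
lemma foldr_additive (hadd : ∀ x y : ℝ, f (x + y) = f x + f y) : ∀ (l : List ℝ) (x y : ℝ),
    l.foldr δ f (x + y) = l.foldr δ f x + l.foldr δ f y := by
  intro l
  induction l with
  | nil => exact hadd
  | cons a l ih =>
    intro x y
    simp only [List.foldr_cons, δ, mul_add, ih]
    ring

/-- the multiadditive symmetric form: value at 1 -/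
noncomputable def E (f : ℝ → ℝ) (l : List ℝ) : ℝ := l.foldr δ f 1

lemma E_perm {l₁ l₂ : List ℝ} (p : l₁.Perm l₂) : E f l₁ = E f l₂ := by
  unfold E; rw [foldr_perm p]

lemma E_head_add (hadd : ∀ x y : ℝ, f (x + y) = f x + f y) (a b : ℝ) (r : List ℝ) :
    E f ((a + b) :: r) = E f (a :: r) + E f (b :: r) := by
  simp only [E, List.foldr_cons, δ, mul_one]
  rw [foldr_additive hadd]
  ring

lemma E_mid_add (hadd : ∀ x y : ℝ, f (x + y) = f x + f y) (t : List ℝ) (a b : ℝ) (r : List ℝ) :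
    E f (t ++ (a + b) :: r) = E f (t ++ a :: r) + E f (t ++ b :: r) := by
  rw [E_perm (List.perm_middle (a := a + b)), E_perm (l₂ := (a : ℝ) :: (t ++ r)) List.perm_middle,
    E_perm (l₂ := (b : ℝ) :: (t ++ r)) List.perm_middle]
  exact E_head_add hadd a b (t ++ r)

-- additive functions are ℚ-homogeneous at 1, and vanish if bounded
section additive
variable (φ : ℝ → ℝ)

lemma additive_zero (hφ : ∀ x y : ℝ, φ (x + y) = φ x + φ y) : φ 0 = 0 := by
  have := hφ 0 0; simp at this; linarith

lemma additive_nat_mul (hφ : ∀ x y : ℝ, φ (x + y) = φ x + φ y) : ∀ (m : ℕ) (x : ℝ), φ (m * x) = m * φ x := by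
  intro m
  induction m with
  | zero => intro x; simpa using additive_zero φ hφ
  | succ m ih =>
    intro x
    have : ((m : ℝ) + 1) * x = m * x + x := by ring
    push_cast
    rw [this, hφ, ih]
    ring

lemma additive_neg (hφ : ∀ x y : ℝ, φ (x + y) = φ x + φ y) (x : ℝ) : φ (-x) = - φ x := by
  have := hφ x (-x); simp at this
  have h0 := additive_zero φ hφ
  rw [h0] at this; linarith

lemma additive_int_mul (hφ : ∀ x y : ℝ, φ (x + y) = φ x + φ y) : ∀ (m : ℤ) (x : ℝ), φ (m * x) = m * φ x := by
  intro m x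
  rcases le_or_gt 0 m with h | h
  · lift m to ℕ using h
    push_cast
    exact additive_nat_mul φ hφ m x
  · obtain ⟨k, rfl⟩ : ∃ k : ℕ, m = -(k : ℤ) := ⟨m.natAbs, by omega⟩
    push_cast
    rw [show -(k : ℝ) * x = -((k : ℝ) * x) by ring, additive_neg φ hφ,
      additive_nat_mul φ hφ k x]
    ring

lemma additive_rat (hφ : ∀ x y : ℝ, φ (x + y) = φ x + φ y) (q : ℚ) : φ (q : ℝ) = q * φ 1 := by
  have hden : ((q.den : ℝ)) ≠ 0 := by exact_mod_cast q.den_nz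
  have h1 : φ ((q.num : ℝ)) = q.num * φ 1 := by
    simpa using additive_int_mul φ hφ q.num 1
  have h2 : φ ((q.den : ℝ) * (q : ℝ)) = q.den * φ (q : ℝ) := by
    exact_mod_cast additive_nat_mul φ hφ q.den (q : ℝ)
  have h3 : ((q.den : ℝ)) * (q : ℝ) = (q.num : ℝ) := by
    rw [Rat.cast_def]; field_simp
  rw [h3, h1] at h2
  have h4 : (q : ℝ) = q.num / q.den := by rw [Rat.cast_def]
  have h5 : φ (q : ℝ) = (q.num * φ 1) / q.den := by
    rw [eq_div_iff hden]; linarith [h2]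
  rw [h5, h4]; ring

lemma additive_bounded_zero (hφ : ∀ x y : ℝ, φ (x + y) = φ x + φ y) (M : ℝ) (hb : ∀ x : ℝ, |φ x| ≤ M) : ∀ x : ℝ, φ x = 0 := by
  intro x
  by_contra hx
  have hpos : 0 < |φ x| := abs_pos.2 hx
  obtain ⟨m, hm⟩ := exists_nat_gt (M / |φ x|)
  have h1 : |φ ((m : ℝ) * x)| ≤ M := hb _
  rw [additive_nat_mul φ hφ m x, abs_mul, Nat.abs_cast] at h1
  have : M / |φ x| < m := hm
  rw [div_lt_iff₀ hpos] at this
  linarith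

end additive


-- rational slot kill
lemma E_head_one (f : ℝ → ℝ) (r : List ℝ) : E f ((1 : ℝ) :: r) = 0 := by
  simp [E, δ]

lemma E_head_rat (hadd : ∀ x y : ℝ, f (x + y) = f x + f y) (q : ℚ) (r : List ℝ) :
    E f ((q : ℝ) :: r) = 0 := by
  have h := additive_rat (fun a => E f (a :: r)) (fun x y => E_head_add hadd x y r) q
  rw [h, E_head_one]
  ring

-- binomial recombination
lemma binom_step (m : ℕ) (A : ℕ → ℝ) :
    (∑ i ∈ Finset.range (m + 1), (m.choose i : ℝ) * A (i + 1)) +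
      (∑ i ∈ Finset.range (m + 1), (m.choose i : ℝ) * A i) =
    ∑ i ∈ Finset.range (m + 2), ((m + 1).choose i : ℝ) * A i := by
  rw [Finset.sum_range_succ' (fun i => (((m + 1).choose i : ℕ) : ℝ) * A i) (m + 1)]
  have hsp : ∀ i : ℕ, (((m + 1).choose (i + 1) : ℕ) : ℝ) * A (i + 1) =
      (m.choose i : ℝ) * A (i + 1) + (m.choose (i + 1) : ℝ) * A (i + 1) := by
    intro i; rw [Nat.choose_succ_succ]; push_cast; ring
  simp only [hsp]
  rw [Finset.sum_add_distrib]
  have h2 : (∑ i ∈ Finset.range (m + 1), (m.choose i : ℝ) * A i) =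
      (∑ i ∈ Finset.range (m + 1), (m.choose (i + 1) : ℝ) * A (i + 1)) +
        (((m + 1).choose 0 : ℕ) : ℝ) * A 0 := by
    rw [Finset.sum_range_succ' (fun i => (m.choose i : ℝ) * A i) m]
    rw [Finset.sum_range_succ (fun i => (m.choose (i + 1) : ℝ) * A (i + 1)) m]
    simp [Nat.choose_succ_self]
  rw [h2]; ring

-- the multi-binomial expansion of a sum in the replicated slots
lemma E_exp (hadd : ∀ x y : ℝ, f (x + y) = f x + f y) :
    ∀ (m : ℕ) (t : List ℝ) (u v : ℝ),
      E f (t ++ List.replicate m (u + v)) =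
        ∑ i ∈ Finset.range (m + 1),
          (m.choose i : ℝ) * E f (t ++ (List.replicate i u ++ List.replicate (m - i) v)) := by
  intro m
  induction m with
  | zero => intro t u v; simp
  | succ m ih =>
    intro t u v
    rw [List.replicate_succ, E_mid_add hadd t u v _, List.append_cons t u _,
      List.append_cons t v _, ih (t ++ [u]) u v, ih (t ++ [v]) u v]
    have c1 : ∀ i ∈ Finset.range (m + 1),
        (m.choose i : ℝ) * E f (t ++ [u] ++ (List.replicate i u ++ List.replicate (m - i) v)) =
        (m.choose i : ℝ) *
          E f (t ++ (List.replicate (i + 1) u ++ List.replicate (m + 1 - (i + 1)) v)) := by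
      intro i hi
      congr 2
      simp [List.replicate_succ, List.append_assoc]
    have c2 : ∀ i ∈ Finset.range (m + 1),
        (m.choose i : ℝ) * E f (t ++ [v] ++ (List.replicate i u ++ List.replicate (m - i) v)) =
        (m.choose i : ℝ) * E f (t ++ (List.replicate i u ++ List.replicate (m + 1 - i) v)) := by
      intro i hi
      simp only [Finset.mem_range] at hi
      congr 1
      have hperm : (t ++ [v] ++ (List.replicate i u ++ List.replicate (m - i) v)).Perm
          (t ++ (List.replicate i u ++ List.replicate (m + 1 - i) v)) := by
        have h1 : m + 1 - i = (m - i) + 1 := by omega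
        have heq : t ++ [v] ++ (List.replicate i u ++ List.replicate (m - i) v)
            = t ++ ((v : ℝ) :: (List.replicate i u ++ List.replicate (m - i) v)) := by
          simp [List.append_assoc]
        rw [heq, h1, List.replicate_succ]
        exact List.Perm.append_left t List.perm_middle.symm
      exact E_perm hperm
    rw [Finset.sum_congr rfl c1, Finset.sum_congr rfl c2]
    exact binom_step m fun j => E f (t ++ (List.replicate j u ++ List.replicate (m + 1 - j) v))

-- rational translation invariance of the diagonal
lemma E_inv (hadd : ∀ x y : ℝ, f (x + y) = f x + f y) (k : ℕ) (x : ℝ) (q : ℚ) :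
    E f (List.replicate k (x + (q : ℝ))) = E f (List.replicate k x) := by
  have h := E_exp hadd k ([] : List ℝ) (q : ℝ) x
  simp only [List.nil_append] at h
  rw [show (x + (q : ℝ)) = ((q : ℝ) + x) by ring, h]
  rw [Finset.sum_eq_single 0]
  · simp
  · intro i hi hne
    obtain ⟨j, rfl⟩ : ∃ j, i = j + 1 := ⟨i - 1, by omega⟩
    rw [show List.replicate (j + 1) (q : ℝ) ++ List.replicate (k - (j + 1)) x
        = (q : ℝ) :: (List.replicate j (q : ℝ) ++ List.replicate (k - (j + 1)) x) by
      simp [List.replicate_succ]]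
    rw [E_head_rat hadd]
    ring
  · intro h0; simp at h0

-- finite difference fold machinery
lemma foldr_D_congr : ∀ (l : List ℝ) (G H : ℝ → ℝ), (∀ y, G y = H y) →
    ∀ x, l.foldr Δ G x = l.foldr Δ H x := by
  intro l
  induction l with
  | nil => intro G H h x; exact h x
  | cons a l ih =>
    intro G H h x
    simp only [List.foldr_cons, Δ]
    rw [ih G H h (x + a), ih G H h x]

lemma foldr_D_zero : ∀ (l : List ℝ) (x : ℝ), l.foldr Δ (fun _ => (0 : ℝ)) x = 0 := by
  intro l
  induction l with
  | nil => intro x; rfl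
  | cons a l ih =>
    intro x
    simp only [List.foldr_cons, Δ, ih]
    ring

lemma foldr_D_sum {ι : Type*} (s : Finset ι) (c : ι → ℝ) (H : ι → ℝ → ℝ) :
    ∀ (l : List ℝ) (x : ℝ),
      l.foldr Δ (fun y => ∑ i ∈ s, c i * H i y) x = ∑ i ∈ s, c i * (l.foldr Δ (H i)) x := by
  intro l
  induction l with
  | nil => intro x; rfl
  | cons a l ih =>
    intro x
    simp only [List.foldr_cons, Δ, ih]
    rw [← Finset.sum_sub_distrib]
    congr 1
    funext i
    ring

-- the single difference of a partial diagonal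
lemma D_diag (hadd : ∀ x y : ℝ, f (x + y) = f x + f y) (m : ℕ) (t : List ℝ) (a : ℝ) :
    ∀ y : ℝ, Δ a (fun y => E f (t ++ List.replicate m y)) y =
      ∑ i ∈ Finset.range m, (m.choose (i + 1) : ℝ) *
        E f ((t ++ List.replicate (i + 1) a) ++ List.replicate (m - (i + 1)) y) := by
  intro y
  have h := E_exp hadd m t a y
  rw [show (a + y) = (y + a) by ring] at h
  simp only [Δ]
  rw [h, Finset.sum_range_succ' (fun i => (m.choose i : ℝ) *
    E f (t ++ (List.replicate i a ++ List.replicate (m - i) y))) m]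
  simp only [Nat.choose_zero_right, Nat.cast_one, List.replicate_zero, List.nil_append, one_mul,
    Nat.sub_zero]
  rw [add_sub_cancel_right]
  apply Finset.sum_congr rfl
  intro i hi
  rw [List.append_assoc]

lemma Z_lemma (hadd : ∀ x y : ℝ, f (x + y) = f x + f y) :
    ∀ (m : ℕ) (t : List ℝ) (l : List ℝ), m < l.length →
      ∀ x : ℝ, l.foldr Δ (fun y => E f (t ++ List.replicate m y)) x = 0 := by
  intro m
  induction m using Nat.strong_induction_on with
  | _ m ihm =>
    intro t l hlen x
    have hne : l ≠ [] := by
      intro h; rw [h] at hlen; simp only [List.length_nil] at hlen; omega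
    obtain ⟨l', a, rfl⟩ := List.eq_nil_or_concat l |>.resolve_left hne
    rw [List.concat_eq_append, List.foldr_append]
    simp only [List.foldr_cons, List.foldr_nil]
    rcases Nat.eq_zero_or_pos m with hm | hm
    · subst hm
      have hz : ∀ y, Δ a (fun y => E f (t ++ List.replicate 0 y)) y = 0 := by
        intro y; simp [Δ]
      rw [foldr_D_congr l' _ (fun _ => (0 : ℝ)) hz x, foldr_D_zero]
    · have hD : ∀ y, Δ a (fun y => E f (t ++ List.replicate m y)) y =
          ∑ i ∈ Finset.range m, (m.choose (i + 1) : ℝ) *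
            E f ((t ++ List.replicate (i + 1) a) ++ List.replicate (m - (i + 1)) y) :=
        D_diag hadd m t a
      rw [foldr_D_congr l' _ _ hD x, foldr_D_sum]
      apply Finset.sum_eq_zero
      intro i hi
      simp only [Finset.mem_range] at hi
      have hlen' : m - (i + 1) < l'.length := by
        simp only [List.length_concat] at hlen; omega
      rw [ihm (m - (i + 1)) (by omega) _ l' hlen' x]
      ring

lemma Q_lemma (hadd : ∀ x y : ℝ, f (x + y) = f x + f y) :
    ∀ (j : ℕ) (l : List ℝ), l.length = j → ∀ (t : List ℝ) (x : ℝ),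
      l.foldr Δ (fun y => E f (t ++ List.replicate j y)) x = (j.factorial : ℝ) * E f (t ++ l) := by
  intro j
  induction j with
  | zero =>
    intro l hl t x
    rw [List.length_eq_zero_iff] at hl
    subst hl
    simp [E]
  | succ j ihj =>
    intro l hl t x
    have hne : l ≠ [] := by intro h; rw [h] at hl; simp at hl
    obtain ⟨l', a, rfl⟩ := List.eq_nil_or_concat l |>.resolve_left hne
    have hl' : l'.length = j := by
      rw [List.concat_eq_append, List.length_append] at hl; simp at hl; omega
    rw [List.concat_eq_append, List.foldr_append]
    simp only [List.foldr_cons, List.foldr_nil]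
    rw [foldr_D_congr l' _ _ (D_diag hadd (j + 1) t a) x, foldr_D_sum]
    rw [Finset.sum_eq_single 0]
    · simp only [zero_add, Nat.choose_one_right, List.replicate_one]
      rw [show j + 1 - 1 = j by omega]
      rw [ihj l' hl' (t ++ [a]) x]
      have hperm : ((t ++ [a]) ++ l').Perm (t ++ (l' ++ [a])) := by
        rw [List.append_assoc]
        exact List.Perm.append_left t (List.perm_append_comm)
      rw [E_perm hperm]
      rw [Nat.factorial_succ]
      push_cast
      ring
    · intro i hi hne0
      simp only [Finset.mem_range] at hi
      have : j + 1 - (i + 1) < l'.length := by omega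
      rw [Z_lemma hadd (j + 1 - (i + 1)) _ l' this x]
      ring
    · intro h0; exact absurd (Finset.mem_range.2 (Nat.succ_pos j)) h0

-- subset sums of a list
def subsums : List ℝ → List ℝ
  | [] => [0]
  | a :: l => subsums l ++ (subsums l).map (a + ·)

lemma bnd (G : ℝ → ℝ) (C : ℝ) : ∀ (l : List ℝ) (x : ℝ),
    (∀ p ∈ subsums l, |G (x + p)| ≤ C) → |l.foldr Δ G x| ≤ 2 ^ l.length * C := by
  intro l
  induction l with
  | nil =>
    intro x h
    have := h 0 (by simp [subsums])
    simpa using this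
  | cons a l ih =>
    intro x h
    simp only [List.foldr_cons, Δ, List.length_cons]
    have h1 : |List.foldr Δ G l (x + a)| ≤ 2 ^ l.length * C := by
      apply ih
      intro p hp
      rw [add_assoc]
      apply h
      simp only [subsums, List.mem_append, List.mem_map]
      exact Or.inr ⟨p, hp, rfl⟩
    have h2 : |List.foldr Δ G l x| ≤ 2 ^ l.length * C := by
      apply ih
      intro p hp
      apply h
      simp only [subsums, List.mem_append]
      exact Or.inl hp
    calc |List.foldr Δ G l (x + a) - List.foldr Δ G l x|
        ≤ |List.foldr Δ G l (x + a)| + |List.foldr Δ G l x| := abs_sub _ _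
      _ ≤ 2 ^ l.length * C + 2 ^ l.length * C := add_le_add h1 h2
      _ = 2 ^ (l.length + 1) * C := by rw [pow_succ]; ring

-- measure-theoretic part
lemma null_of_all_slices (S : Set ℝ) (h : ∀ a : ℝ, volume (S ∩ Set.Ioc a (a + 1)) = 0) :
    volume S = 0 := by
  have hsub : S ⊆ ⋃ n : ℤ, S ∩ Set.Ioc ((n : ℝ)) ((n : ℝ) + 1) := by
    intro x hx
    refine Set.mem_iUnion.2 ⟨⌈x⌉ - 1, hx, ?_, ?_⟩
    · push_cast; linarith [Int.ceil_lt_add_one x]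
    · push_cast; linarith [Int.le_ceil x]
  refine le_antisymm ?_ zero_le
  calc volume S ≤ volume (⋃ n : ℤ, S ∩ Set.Ioc ((n : ℝ)) ((n : ℝ) + 1)) := measure_mono hsub
    _ ≤ ∑' n : ℤ, volume (S ∩ Set.Ioc ((n : ℝ)) ((n : ℝ) + 1)) := measure_iUnion_le _
    _ ≤ 0 := by simp [h]

lemma conull (B : Set ℝ) (hB : MeasurableSet B) (hpos : 0 < volume B)
    (hinv : ∀ (q : ℚ) (x : ℝ), x ∈ B → x + (q : ℝ) ∈ B) : volume Bᶜ = 0 := by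
  have hiff : ∀ (q : ℚ) (x : ℝ), x + (q : ℝ) ∈ B ↔ x ∈ B := by
    intro q x
    constructor
    · intro h
      have := hinv (-q) _ h
      simpa using this
    · exact hinv q x
  have htrans : ∀ (q : ℚ) (a b : ℝ),
      volume (B ∩ Set.Ioc (a + (q : ℝ)) (b + (q : ℝ))) = volume (B ∩ Set.Ioc a b) := by
    intro q a b
    have hpre : (fun x => x + (q : ℝ)) ⁻¹' (B ∩ Set.Ioc (a + (q : ℝ)) (b + (q : ℝ)))
        = B ∩ Set.Ioc a b := by
      ext x
      simp only [Set.mem_preimage, Set.mem_inter_iff, Set.mem_Ioc, hiff q x,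
        add_lt_add_iff_right, add_le_add_iff_right]
    rw [← hpre, measure_preimage_add_right]
  have hle : ∀ (a a' L ε : ℝ), 0 < ε →
      volume (B ∩ Set.Ioc a' (a' + L)) ≤ volume (B ∩ Set.Ioc a (a + L)) + ENNReal.ofReal ε := by
    intro a a' L ε hε
    obtain ⟨q, hq1, hq2⟩ := exists_rat_btwn (show a' - a - ε < a' - a by linarith)
    have hq1' : a' < a + (q : ℝ) + ε := by linarith
    have hq2' : a + (q : ℝ) < a' := by linarith
    have hsub : B ∩ Set.Ioc a' (a' + L) ⊆
        (B ∩ Set.Ioc (a + (q : ℝ)) (a + (q : ℝ) + L)) ∪ Set.Ioc (a + (q : ℝ) + L) (a' + L) := by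
      rintro x ⟨hxB, hx1, hx2⟩
      by_cases hc : x ≤ a + (q : ℝ) + L
      · exact Or.inl ⟨hxB, by linarith, hc⟩
      · exact Or.inr ⟨by linarith, hx2⟩
    have h1 : volume (B ∩ Set.Ioc (a + (q : ℝ)) (a + (q : ℝ) + L))
        = volume (B ∩ Set.Ioc a (a + L)) := by
      have := htrans q a (a + L)
      rw [show a + L + (q : ℝ) = a + (q : ℝ) + L by ring] at this
      exact this
    calc volume (B ∩ Set.Ioc a' (a' + L))
        ≤ volume (B ∩ Set.Ioc (a + (q : ℝ)) (a + (q : ℝ) + L))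
            + volume (Set.Ioc (a + (q : ℝ) + L) (a' + L)) :=
          (measure_mono hsub).trans (measure_union_le _ _)
      _ ≤ volume (B ∩ Set.Ioc a (a + L)) + ENNReal.ofReal ε := by
          rw [h1, Real.volume_Ioc]
          exact add_le_add le_rfl (ENNReal.ofReal_le_ofReal (by linarith))
  have hfin : ∀ (a L : ℝ), volume (B ∩ Set.Ioc a (a + L)) < ⊤ :=
    fun a L => lt_of_le_of_lt (measure_mono Set.inter_subset_right)
      (by rw [Real.volume_Ioc]; exact ENNReal.ofReal_lt_top)
  have huni : ∀ a a' L : ℝ, volume (B ∩ Set.Ioc a' (a' + L)) = volume (B ∩ Set.Ioc a (a + L)) := by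
    have key : ∀ a a' L : ℝ,
        volume (B ∩ Set.Ioc a' (a' + L)) ≤ volume (B ∩ Set.Ioc a (a + L)) := by
      intro a a' L
      apply ENNReal.le_of_forall_pos_le_add
      intro ε hε _
      have := hle a a' L ε (by exact_mod_cast hε)
      rwa [ENNReal.ofReal_coe_nnreal] at this
    exact fun a a' L => le_antisymm (key a a' L) (key a' a L)
  set w : ℝ → ℝ≥0∞ := fun L => volume (B ∩ Set.Ioc 0 L) with hwdef
  have hw : ∀ a L : ℝ, volume (B ∩ Set.Ioc a (a + L)) = w L := by
    intro a L
    have := huni 0 a L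
    rwa [zero_add] at this
  have hwadd : ∀ L1 L2 : ℝ, 0 ≤ L1 → 0 ≤ L2 → w (L1 + L2) = w L1 + w L2 := by
    intro L1 L2 h1 h2
    have hun : Set.Ioc (0 : ℝ) (L1 + L2) = Set.Ioc 0 L1 ∪ Set.Ioc L1 (L1 + L2) :=
      (Set.Ioc_union_Ioc_eq_Ioc h1 (by linarith)).symm
    have hdisj : Disjoint (B ∩ Set.Ioc (0 : ℝ) L1) (B ∩ Set.Ioc L1 (L1 + L2)) :=
      (Set.Ioc_disjoint_Ioc_of_le le_rfl).mono Set.inter_subset_right Set.inter_subset_right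
    rw [hwdef]
    simp only
    rw [hun, Set.inter_union_distrib_left,
      measure_union hdisj (hB.inter measurableSet_Ioc), hw L1 L2]
  have hwnat : ∀ (m : ℕ) (L : ℝ), 0 ≤ L → w (m * L) = m * w L := by
    intro m
    induction m with
    | zero => intro L hL; simp [hwdef]
    | succ m ih =>
      intro L hL
      have : ((m : ℝ) + 1) * L = m * L + L := by ring
      push_cast
      rw [this, hwadd _ _ (by positivity) hL, ih L hL]
      ring
  set c : ℝ≥0∞ := w 1 with hcdef
  have hc1 : c ≤ 1 := by
    have : volume (B ∩ Set.Ioc (0:ℝ) 1) ≤ volume (Set.Ioc (0:ℝ) 1) :=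
      measure_mono Set.inter_subset_right
    rwa [Real.volume_Ioc, show ((1:ℝ) - 0) = 1 by ring, ENNReal.ofReal_one] at this
  have hcne : c ≠ ⊤ := (lt_of_le_of_lt hc1 ENNReal.one_lt_top).ne
  have hwq : ∀ q : ℚ, 0 ≤ q → w (q : ℝ) = ENNReal.ofReal (q : ℝ) * c := by
    intro q hq
    have hden : ((q.den : ℝ≥0∞)) ≠ 0 := by
      simp [q.den_nz]
    have hdenne : ((q.den : ℝ≥0∞)) ≠ ⊤ := by simp
    apply (ENNReal.mul_right_inj hden hdenne).1
    have hnum : (0:ℤ) ≤ q.num := Rat.num_nonneg.2 hq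
    set p : ℕ := q.num.toNat with hpdef
    have hqr : (q.den : ℝ) * (q : ℝ) = (p : ℝ) := by
      have h1 : ((p : ℕ) : ℝ) = ((q.num : ℤ) : ℝ) := by
        exact_mod_cast congrArg (fun z : ℤ => (z : ℝ)) (Int.toNat_of_nonneg hnum)
      rw [Rat.cast_def, h1]
      field_simp
    have e1 : (q.den : ℝ≥0∞) * w (q : ℝ) = w ((q.den : ℝ) * (q : ℝ)) := by
      rw [hwnat q.den (q : ℝ) (by exact_mod_cast hq)]
    have e2 : w ((p : ℝ)) = (p : ℝ≥0∞) * c := by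
      have := hwnat p 1 zero_le_one
      rw [mul_one] at this
      rw [this, hcdef]
    rw [e1, hqr, e2]
    have hpd : (q.den : ℝ≥0∞) * ENNReal.ofReal (q : ℝ) = (p : ℝ≥0∞) := by
      rw [← ENNReal.ofReal_natCast q.den, ← ENNReal.ofReal_mul (by positivity), hqr,
        ENNReal.ofReal_natCast]
    rw [← mul_assoc, hpd]
  have hwr : ∀ L : ℝ, 0 ≤ L → w L = ENNReal.ofReal L * c := by
    intro L hL
    rcases eq_or_lt_of_le hL with hL0 | hL0
    · rw [← hL0]
      simp [hwdef]
    apply le_antisymm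
    · apply ENNReal.le_of_forall_pos_le_add
      intro ε hε _
      have hε' : (0 : ℝ) < (ε : ℝ) := by exact_mod_cast hε
      obtain ⟨q, hq1, hq2⟩ := exists_rat_btwn (show L < L + (ε : ℝ) by linarith)
      have hq0 : (0:ℚ) ≤ q := by
        have : (0:ℝ) < (q:ℝ) := lt_trans hL0 hq1
        exact_mod_cast this.le
      have hmono : w L ≤ w (q : ℝ) :=
        measure_mono (Set.inter_subset_inter_right _ (Set.Ioc_subset_Ioc_right hq1.le))
      calc w L ≤ w (q : ℝ) := hmono
        _ = ENNReal.ofReal (q : ℝ) * c := hwq q hq0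
        _ ≤ (ENNReal.ofReal L + ENNReal.ofReal (ε : ℝ)) * c := by
            gcongr
            rw [← ENNReal.ofReal_add hL hε'.le]
            exact ENNReal.ofReal_le_ofReal (by linarith)
        _ ≤ ENNReal.ofReal L * c + ↑ε := by
            rw [add_mul]
            gcongr
            calc ENNReal.ofReal (ε : ℝ) * c ≤ ENNReal.ofReal (ε : ℝ) * 1 := by gcongr
              _ = ↑ε := by rw [mul_one, ENNReal.ofReal_coe_nnreal]
    · apply ENNReal.le_of_forall_pos_le_add
      intro ε hε _
      have hε' : (0 : ℝ) < (ε : ℝ) := by exact_mod_cast hε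
      obtain ⟨q, hq1, hq2⟩ := exists_rat_btwn (show max 0 (L - (ε : ℝ)) < L by
        rcases le_or_gt (L - (ε : ℝ)) 0 with h' | h'
        · rw [max_eq_left h']; exact hL0
        · rw [max_eq_right h'.le]; linarith)
      have hq0 : (0:ℚ) ≤ q := by
        have : (0:ℝ) ≤ (q:ℝ) := le_trans (le_max_left _ _) hq1.le
        exact_mod_cast this
      have hLq : L ≤ (q : ℝ) + (ε : ℝ) := by
        have := le_trans (le_max_right 0 (L - (ε : ℝ))) hq1.le
        linarith
      have hmono : w (q : ℝ) ≤ w L :=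
        measure_mono (Set.inter_subset_inter_right _ (Set.Ioc_subset_Ioc_right hq2.le))
      calc ENNReal.ofReal L * c ≤ (ENNReal.ofReal ((q : ℝ)) + ENNReal.ofReal (ε : ℝ)) * c := by
            gcongr
            rw [← ENNReal.ofReal_add (by exact_mod_cast hq0) hε'.le]
            exact ENNReal.ofReal_le_ofReal hLq
        _ ≤ w (q : ℝ) + ↑ε := by
            rw [add_mul, hwq q hq0]
            gcongr
            calc ENNReal.ofReal (ε : ℝ) * c ≤ ENNReal.ofReal (ε : ℝ) * 1 := by gcongr
              _ = ↑ε := by rw [mul_one, ENNReal.ofReal_coe_nnreal]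
        _ ≤ w L + ↑ε := by gcongr
  -- extensionality of measures
  have hext : volume.restrict B = c • volume := by
    apply MeasureTheory.Measure.ext_of_Ioc' (volume.restrict B) (c • volume)
    · intro a b hab
      rw [Measure.restrict_apply measurableSet_Ioc]
      exact ((measure_mono Set.inter_subset_left).trans_lt
        (by rw [Real.volume_Ioc]; exact ENNReal.ofReal_lt_top)).ne
    · intro a b hab
      rw [Measure.restrict_apply measurableSet_Ioc, Set.inter_comm]
      have hw' : volume (B ∩ Set.Ioc a b) = w (b - a) := by
        have := hw a (b - a)
        rwa [show a + (b - a) = b by ring] at this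
      rw [hw', hwr (b - a) (by linarith)]
      simp [Measure.smul_apply, Real.volume_Ioc, mul_comm]
  have hcc : c = c * c := by
    have h1 : (volume.restrict B) (B ∩ Set.Ioc 0 1) = c := by
      rw [Measure.restrict_apply (hB.inter measurableSet_Ioc)]
      have : (B ∩ Set.Ioc 0 1) ∩ B = B ∩ Set.Ioc 0 1 := by
        ext x; constructor
        · rintro ⟨h1, _⟩; exact h1
        · rintro ⟨h1, h2⟩; exact ⟨⟨h1, h2⟩, h1⟩
      rw [this]
    have h2 : (c • volume) (B ∩ Set.Ioc 0 1) = c * c := by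
      rw [Measure.smul_apply, smul_eq_mul]
    calc c = (volume.restrict B) (B ∩ Set.Ioc 0 1) := h1.symm
      _ = (c • volume) (B ∩ Set.Ioc 0 1) := by rw [hext]
      _ = c * c := h2
  have hcne0 : c ≠ 0 := by
    intro hc0
    apply hpos.ne'
    apply null_of_all_slices
    intro a
    rw [hw a 1, ← hcdef, hc0]
  have hc_one : c = 1 := by
    have h1 : c * 1 = c * c := by rw [mul_one]; exact hcc
    exact ((ENNReal.mul_right_inj hcne0 hcne).1 h1).symm
  -- complement is null
  apply null_of_all_slices
  intro a
  have hsl : Bᶜ ∩ Set.Ioc a (a + 1) = Set.Ioc a (a + 1) \ (Set.Ioc a (a + 1) ∩ B) := by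
    ext x
    simp only [Set.mem_inter_iff, Set.mem_compl_iff, Set.mem_diff]
    tauto
  rw [hsl, measure_diff Set.inter_subset_left
    ((measurableSet_Ioc.inter hB).nullMeasurableSet)
    (((measure_mono Set.inter_subset_left).trans_lt
      (by rw [Real.volume_Ioc]; exact ENNReal.ofReal_lt_top)).ne)]
  rw [Set.inter_comm, hw a 1, ← hcdef, hc_one, Real.volume_Ioc]
  simp

-- iterate vs replicate
lemma iter_rep (f : ℝ → ℝ) (α : ℝ) : ∀ m : ℕ, (δ α)^[m] f = (List.replicate m α).foldr δ f := by
  intro m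
  induction m with
  | zero => rfl
  | succ m ih => rw [Function.iterate_succ_apply', ih, List.replicate_succ, List.foldr_cons]

-- δ-folds over nonempty lists ignore linear parts
lemma lin_shift (f d : ℝ → ℝ) (c : ℝ) (h : ∀ x, f x = d x + c * x) :
    ∀ (t : List ℝ) (a : ℝ), (a :: t).foldr δ f = (a :: t).foldr δ d := by
  intro t
  induction t with
  | nil =>
    intro a
    funext x
    simp only [List.foldr_cons, List.foldr_nil, δ, h]
    ring
  | cons b t ih =>
    intro a
    show δ a ((b :: t).foldr δ f) = δ a ((b :: t).foldr δ d)
    rw [ih b]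

-- THE main lemma: boundedness of the diagonal on a positive measure set kills E
lemma main_forward (f : ℝ → ℝ) (hadd : ∀ x y : ℝ, f (x + y) = f x + f y) (n : ℕ)
    (A : Set ℝ) (hA : MeasurableSet A) (hpos : 0 < volume A) (C : ℝ)
    (hC : ∀ α ∈ A, |E f (List.replicate (n + 1) α)| ≤ C) :
    ∀ l : List ℝ, l.length = n + 1 → E f l = 0 := by
  set B : Set ℝ := ⋃ q : ℚ, (fun x : ℝ => x + (q : ℝ)) ⁻¹' A with hBdef
  have hBmeas : MeasurableSet B :=
    MeasurableSet.iUnion fun q => hA.preimage (measurable_add_const _)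
  have hAB : A ⊆ B := fun x hx => Set.mem_iUnion.2 ⟨0, by simpa using hx⟩
  have hBpos : 0 < volume B := lt_of_lt_of_le hpos (measure_mono hAB)
  have hBinv : ∀ (q : ℚ) (x : ℝ), x ∈ B → x + (q : ℝ) ∈ B := by
    intro q x hx
    obtain ⟨q', hq'⟩ := Set.mem_iUnion.1 hx
    refine Set.mem_iUnion.2 ⟨q' - q, ?_⟩
    simp only [Set.mem_preimage] at hq' ⊢
    rw [show x + (q : ℝ) + ((q' - q : ℚ) : ℝ) = x + (q' : ℝ) by push_cast; ring]
    exact hq'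
  have hBnull := conull B hBmeas hBpos hBinv
  have hgB : ∀ x ∈ B, |E f (List.replicate (n + 1) x)| ≤ C := by
    intro x hx
    obtain ⟨q, hq⟩ := Set.mem_iUnion.1 hx
    simp only [Set.mem_preimage] at hq
    rw [← E_inv hadd (n + 1) x q]
    exact hC _ hq
  have hEbound : ∀ l : List ℝ, l.length = n + 1 →
      |E f l| ≤ 2 ^ (n + 1) * C / ((n + 1).factorial : ℝ) := by
    intro l hl
    have hbad : volume (⋃ p ∈ subsums l, (fun x : ℝ => x + p) ⁻¹' Bᶜ) = 0 := by
      refine le_antisymm ?_ zero_le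
      refine le_trans (measure_biUnion_le (μ := (volume : Measure ℝ))
        (I := {p : ℝ | p ∈ subsums l}) ((subsums l).finite_toSet.countable)
        (fun p => (fun x : ℝ => x + p) ⁻¹' Bᶜ)) ?_
      have hz : ∀ p : ℝ, volume ((fun x : ℝ => x + p) ⁻¹' Bᶜ) = 0 := by
        intro p; rw [measure_preimage_add_right]; exact hBnull
      refine le_of_eq ?_
      calc (∑' i : {p : ℝ | p ∈ subsums l}, volume ((fun x : ℝ => x + (i : ℝ)) ⁻¹' Bᶜ))
          = ∑' _ : {p : ℝ | p ∈ subsums l}, (0 : ℝ≥0∞) := tsum_congr (fun i => hz i)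
        _ = 0 := tsum_zero
    have hex : ∃ x : ℝ, x ∉ ⋃ p ∈ subsums l, (fun x : ℝ => x + p) ⁻¹' Bᶜ := by
      by_contra hcon
      push_neg at hcon
      have hsub : (Set.univ : Set ℝ) ⊆ ⋃ p ∈ subsums l, (fun x : ℝ => x + p) ⁻¹' Bᶜ :=
        fun x _ => hcon x
      have := (measure_mono hsub).trans_eq hbad
      rw [Real.volume_univ] at this
      exact absurd this (by simp)
    obtain ⟨x, hx⟩ := hex
    have hxs : ∀ p ∈ subsums l, x + p ∈ B := by
      intro p hp
      by_contra hnb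
      exact hx (Set.mem_biUnion hp hnb)
    have h1 := bnd (fun y => E f (List.replicate (n + 1) y)) C l x
      (fun p hp => hgB _ (hxs p hp))
    have h2 := Q_lemma hadd (n + 1) l hl [] x
    simp only [List.nil_append] at h2
    rw [hl, h2] at h1
    have hfacpos : (0 : ℝ) < ((n + 1).factorial : ℝ) := by
      exact_mod_cast (n + 1).factorial_pos
    rw [abs_mul, abs_of_nonneg hfacpos.le] at h1
    rw [le_div_iff₀ hfacpos]
    linarith
  intro l hl
  cases l with
  | nil => simp at hl
  | cons a t =>
    have hφ : ∀ x y : ℝ, E f ((x + y) :: t) = E f (x :: t) + E f (y :: t) :=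
      fun x y => E_head_add hadd x y t
    refine additive_bounded_zero (fun z => E f (z :: t)) hφ
      (2 ^ (n + 1) * C / ((n + 1).factorial : ℝ)) ?_ a
    intro z
    apply hEbound
    simp only [List.length_cons] at hl ⊢
    omega

lemma final_forward (f : ℝ → ℝ) (hadd : ∀ x y : ℝ, f (x + y) = f x + f y) (n : ℕ)
    (A : Set ℝ) (hA : MeasurableSet A) (hpos : 0 < volume A) (C : ℝ)
    (hC : ∀ α ∈ A, |((δ α)^[n + 1] f) 1| ≤ C) :
    ∃ d : ℝ → ℝ, IsDerivOfOrder n d ∧ ∀ x : ℝ, f x = d x + f 1 * x := by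
  have hC' : ∀ α ∈ A, |E f (List.replicate (n + 1) α)| ≤ C := by
    intro α hα
    have := hC α hα
    rwa [iter_rep f α (n + 1)] at this
  have hE0 := main_forward f hadd n A hA hpos C hC'
  refine ⟨fun x => f x - f 1 * x, ⟨?_, ?_, ?_⟩, ?_⟩
  · intro x y
    simp only
    rw [hadd]
    ring
  · simp only
    ring
  · intro l hl x
    cases l with
    | nil => simp at hl
    | cons a t =>
      have hshift := lin_shift f (fun x => f x - f 1 * x) (f 1) (fun x => by ring) t a
      rw [← hshift]
      have hlin : ∀ β : ℝ, t.foldr δ f β = β * t.foldr δ f 1 := by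
        intro β
        have h0 : E f (β :: t) = 0 := by
          apply hE0
          simp only [List.length_cons] at hl ⊢
          omega
        simp only [E, List.foldr_cons, δ, mul_one] at h0
        linarith
      simp only [List.foldr_cons, δ]
      rw [hlin (a * x), hlin x]
      ring
  · intro x
    ring

end Stmt11Aux

theorem stmt_11 (n : ℕ) (f : ℝ → ℝ)
    (hadd : ∀ x y : ℝ, f (x + y) = f x + f y) :
    ((∃ α₀ : ℝ, ContinuousAt (fun α : ℝ => ((δ α)^[n + 1] f) 1) α₀) ∨
      (∃ s : Set ℝ, MeasurableSet s ∧ 0 < volume s ∧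
        ∃ C : ℝ, ∀ α ∈ s, |((δ α)^[n + 1] f) 1| ≤ C)) ↔
    ∃ d : ℝ → ℝ, IsDerivOfOrder n d ∧ ∀ x : ℝ, f x = d x + f 1 * x := by
  constructor
  · rintro (⟨α₀, hcont⟩ | ⟨s, hs, hspos, C, hC⟩)
    · rw [Metric.continuousAt_iff] at hcont
      obtain ⟨ρ, hρ, hball⟩ := hcont 1 one_pos
      apply Stmt11Aux.final_forward f hadd n (Metric.ball α₀ ρ) measurableSet_ball
        (Metric.measure_ball_pos volume α₀ hρ) (|((δ α₀)^[n + 1] f) 1| + 1)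
      intro α hα
      have hd := hball (Metric.mem_ball.1 hα)
      rw [Real.dist_eq] at hd
      calc |((δ α)^[n + 1] f) 1|
          = |(((δ α)^[n + 1] f) 1 - ((δ α₀)^[n + 1] f) 1) + ((δ α₀)^[n + 1] f) 1| := by
            ring_nf
        _ ≤ |((δ α)^[n + 1] f) 1 - ((δ α₀)^[n + 1] f) 1| + |((δ α₀)^[n + 1] f) 1| :=
            abs_add_le _ _
        _ ≤ |((δ α₀)^[n + 1] f) 1| + 1 := by linarith
    · exact Stmt11Aux.final_forward f hadd n s hs hspos C hC
  · rintro ⟨d, ⟨hd1, hd2, hd3⟩, hfd⟩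
    left
    refine ⟨0, ?_⟩
    have hzero : (fun α : ℝ => ((δ α)^[n + 1] f) 1) = fun _ => (0 : ℝ) := by
      funext α
      rw [Stmt11Aux.iter_rep f α (n + 1), List.replicate_succ,
        Stmt11Aux.lin_shift f d (f 1) hfd (List.replicate n α) α, ← List.replicate_succ]
      exact hd3 _ List.length_replicate 1
    rw [hzero]
    exact continuousAt_const
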